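/- arXiv:2312.01736 — 3 statements merged into one kernel-verified Lean document; each statement's English description precedes it below -/
import Mathlib

section
/- Let Θ be a bounded operator on H ⊕ H with Θ*SΘ = S (S = diag(1,-1)), and suppose Θ(φ_t, Jφ_t) = (φ_0, Jφ_0) for unit vectors φ_0, φ_t ∈ H = L²(ℝ³). Let L be the operator such that Θ(f, Jf) = (Lf, JLf) for all f (i.e., Θ commutes with the swap-conjugation J-structure). Then Im ⟨φ_0, L A φ_t⟩ = Im ⟨φ_t, A φ_t⟩ for every bounded operator A on H commuting appropriately, where LAφ_t denotes the first component of Θ(Aφ_t, JAφ_t). In particular, if A is self-adjoint then Im ⟨φ_0, L A φ_t⟩ = 0. -/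
open scoped ComplexInnerProductSpace
open ContinuousLinearMap

/-- Let `Θ = [[U, JVJ],[V, JUJ]]` on `H ⊕ H` satisfy `Θ*SΘ = S`
(expressed via the sesquilinear form with `S = diag(1,-1)`), and suppose
`Θ(φ_t, Jφ_t) = (φ_0, Jφ_0)` for unit vectors `φ_0, φ_t`.  With `L = U + JV`
(so that `L(Aφ_t)` is the first component of `Θ(Aφ_t, JAφ_t)`), one has
`Im ⟨φ_0, L A φ_t⟩ = Im ⟨φ_t, A φ_t⟩` for every bounded operator `A`; in
particular `Im ⟨φ_0, L A φ_t⟩ = 0` whenever `A` is self-adjoint. -/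
theorem stmt_4 {H : Type*} [NormedAddCommGroup H] [InnerProductSpace ℂ H] [CompleteSpace H]
    (J : H → H)
    (hJadd : ∀ f g, J (f + g) = J f + J g)
    (hJsmul : ∀ (c : ℂ) (f : H), J (c • f) = (starRingEnd ℂ c) • J f)
    (hJinv : ∀ f, J (J f) = f)
    (hJinner : ∀ f g, ⟪J f, J g⟫ = ⟪g, f⟫)
    (U V : H →L[ℂ] H)
    (hS : ∀ x y : H × H,
      ⟪U x.1 + J (V (J x.2)), U y.1 + J (V (J y.2))⟫
        - ⟪V x.1 + J (U (J x.2)), V y.1 + J (U (J y.2))⟫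
      = ⟪x.1, y.1⟫ - ⟪x.2, y.2⟫)
    (φ₀ φt : H) (hφ₀ : ‖φ₀‖ = 1) (hφt : ‖φt‖ = 1)
    (hcond1 : U φt + J (V (J (J φt))) = φ₀)
    (hcond2 : V φt + J (U (J (J φt))) = J φ₀) :
    ∀ A : H →L[ℂ] H,
      ((⟪φ₀, U (A φt) + J (V (A φt))⟫ : ℂ).im = (⟪φt, A φt⟫ : ℂ).im) ∧
      (IsSelfAdjoint A → (⟪φ₀, U (A φt) + J (V (A φt))⟫ : ℂ).im = 0) := by
  intro A
  set w := U (A φt) + J (V (A φt)) with hw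
  have key := hS (φt, J φt) (A φt, J (A φt))
  simp only [hJinv] at key hcond1 hcond2 ⊢
  rw [hcond1, hcond2] at key
  -- key : ⟪φ₀, U (A φt) + J (V (A φt))⟫ - ⟪J φ₀, V (A φt) + J (U (A φt))⟫
  --       = ⟪φt, A φt⟫ - ⟪J φt, J (A φt)⟫
  have hJw : J w = V (A φt) + J (U (A φt)) := by
    rw [hw, hJadd, hJinv, add_comm]
  rw [← hJw, hJinner, hJinner] at key
  have key2 : (⟪φ₀, w⟫ : ℂ) - (starRingEnd ℂ) ⟪φ₀, w⟫
      = ⟪φt, A φt⟫ - (starRingEnd ℂ) ⟪φt, A φt⟫ := by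
    rwa [inner_conj_symm, inner_conj_symm]
  have him : (⟪φ₀, w⟫ : ℂ).im = (⟪φt, A φt⟫ : ℂ).im := by
    have := congrArg Complex.im key2
    simp only [Complex.sub_im, Complex.conj_im] at this
    linarith
  refine ⟨him, fun hA => ?_⟩
  have hsym := hA.isSymmetric
  have hs := hsym φt φt
  have heq : (⟪φt, A φt⟫ : ℂ) = (starRingEnd ℂ) ⟪φt, A φt⟫ := by
    calc (⟪φt, A φt⟫ : ℂ) = (starRingEnd ℂ) ⟪A φt, φt⟫ := (inner_conj_symm _ _).symm
    _ = (starRingEnd ℂ) ⟪φt, A φt⟫ := congrArg _ hs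
  have h0 : (⟪φt, A φt⟫ : ℂ).im = 0 := by
    have := congrArg Complex.im heq
    simp only [Complex.conj_im] at this
    linarith
  rw [him, h0]
end

section
/- On the bosonic Fock space, for any f ∈ L²(ℝ³) with a(f), a*(f) the standard annihilation/creation operators and N the number operator, the operators b(f) = √((n−N)/n)·a(f) and b*(f) = a*(f)·√((n−N)/n) (defined on the truncated Fock space with N ≤ n) satisfy [b(f), b(g)] = 0, [b*(f), b*(g)] = 0, and [b(f), b*(g)] = ⟨f,g⟩(1 − N/n) − (1/n) a*(g) a(f). -/
open scoped ComplexInnerProductSpace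

/-- For the operators `b(f) = √((n−N)/n)·a(f)` and
`b*(f) = a*(f)·√((n−N)/n)` on the truncated bosonic Fock space, the standard CCR
for `a, a*` and the functional-calculus relations for `sq = √((n−N)/n)` (with
`sq² = 1 − N/n` and shift relations `a(f) sq = sq₊ a(f)`, `sq a*(g) = a*(g) sq₊`
where `sq₊² = 1 − (N+1)/n`) imply `[b(f), b(g)] = 0`, `[b*(f), b*(g)] = 0` and
`[b(f), b*(g)] = ⟨f,g⟩(1 − N/n) − (1/n) a*(g) a(f)`. -/
theorem stmt_6 {Hsp F : Type*}
    [NormedAddCommGroup Hsp] [InnerProductSpace ℂ Hsp]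
    [AddCommGroup F] [Module ℂ F]
    (n : ℕ) (hn : 0 < n)
    (a ad : Hsp → Module.End ℂ F)  -- annihilation and creation operators
    (N : Module.End ℂ F)            -- number operator
    (sq sq' : Module.End ℂ F)       -- √((n−N)/n) and its shift √((n−N−1)/n)
    (hccr : ∀ f g, a f * ad g - ad g * a f = (⟪f, g⟫ : ℂ) • (1 : Module.End ℂ F))
    (haa : ∀ f g, a f * a g = a g * a f)
    (hadad : ∀ f g, ad f * ad g = ad g * ad f)
    (hsq : sq * sq = 1 - ((n : ℂ))⁻¹ • N)
    (hsq' : sq' * sq' = 1 - ((n : ℂ))⁻¹ • N - ((n : ℂ))⁻¹ • (1 : Module.End ℂ F))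
    (hmove_a : ∀ f, a f * sq = sq' * a f)
    (hmove_ad : ∀ g, sq * ad g = ad g * sq') :
    (∀ f g, (sq * a f) * (sq * a g) = (sq * a g) * (sq * a f)) ∧
    (∀ f g, (ad f * sq) * (ad g * sq) = (ad g * sq) * (ad f * sq)) ∧
    (∀ f g, (sq * a f) * (ad g * sq) - (ad g * sq) * (sq * a f)
      = (⟪f, g⟫ : ℂ) • (1 - ((n : ℂ))⁻¹ • N) - ((n : ℂ))⁻¹ • (ad g * a f)) := by
  have key : ∀ f g, a f * ad g = ad g * a f + (⟪f, g⟫ : ℂ) • (1 : Module.End ℂ F) := by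
    intro f g
    have := hccr f g
    linear_combination (norm := noncomm_ring) this
  refine ⟨?_, ?_, ?_⟩
  · intro f g
    calc sq * a f * (sq * a g) = sq * (a f * sq) * a g := by noncomm_ring
      _ = sq * sq' * (a f * a g) := by rw [hmove_a]; noncomm_ring
      _ = sq * sq' * (a g * a f) := by rw [haa]
      _ = sq * (a g * sq) * a f := by rw [hmove_a]; noncomm_ring
      _ = sq * a g * (sq * a f) := by noncomm_ring
  · intro f g
    calc ad f * sq * (ad g * sq) = ad f * (sq * ad g) * sq := by noncomm_ring
      _ = (ad f * ad g) * (sq' * sq) := by rw [hmove_ad]; noncomm_ring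
      _ = (ad g * ad f) * (sq' * sq) := by rw [hadad]
      _ = ad g * (sq * ad f) * sq := by rw [hmove_ad]; noncomm_ring
      _ = ad g * sq * (ad f * sq) := by noncomm_ring
  · intro f g
    have h1 : sq * a f * (ad g * sq) = ad g * (sq' * sq') * a f + (⟪f, g⟫ : ℂ) • (sq * sq) := by
      calc sq * a f * (ad g * sq)
          = sq * (a f * ad g) * sq := by noncomm_ring
        _ = sq * (ad g * a f + (⟪f, g⟫ : ℂ) • 1) * sq := by rw [key]
        _ = (sq * ad g) * (a f * sq) + (⟪f, g⟫ : ℂ) • (sq * sq) := by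
              simp only [mul_add, add_mul, mul_smul_comm, smul_mul_assoc, mul_one, one_mul]
              noncomm_ring
        _ = (ad g * sq') * (sq' * a f) + (⟪f, g⟫ : ℂ) • (sq * sq) := by
              rw [hmove_ad, hmove_a]
        _ = ad g * (sq' * sq') * a f + (⟪f, g⟫ : ℂ) • (sq * sq) := by noncomm_ring
    have h2 : ad g * sq * (sq * a f) = ad g * (sq * sq) * a f := by noncomm_ring
    rw [h1, h2, hsq, hsq']
    simp only [mul_sub, sub_mul, mul_smul_comm, smul_mul_assoc, mul_one, one_mul, smul_sub]
    abel
end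

section
/- Let Θ(t;0) solve i∂_tΘ(t;0) = −Θ(t;0)T(t) with Θ(0;0) = Id, where T(t) = [[h_t + K̃₁, −K̃₂],[conj(K̃₂), −h_t − K̃₁]] with K̃₂ projected so that K̃₂(Jφ_t) = 0 and (h_t + K̃₁) acting on φ_t as i∂_tφ_t modulo the projection. Then Θ(t;0)(φ_t, Jφ_t) = (φ_0, Jφ_0) for all t, i.e., the Bogoliubov flow transports the condensate pair backwards to the initial condensate pair. -/
open ContinuousLinearMap

set_option maxHeartbeats 1000000
set_option synthInstance.maxHeartbeats 400000

/-- Transport of the condensate pair by the Bogoliubov flow.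
Let `Θ(t;0)` solve `i∂_t Θ(t;0) = −Θ(t;0) T(t)`, `Θ(0;0) = Id`, where
`T(t) = [[A t, B t],[C t, D t]]` is the block generator (with intended blocks
`A = h + K̃₁`, `B = −K̃₂`, `C = conj K̃₂`, `D = −(conj h + conj K̃₁)`) satisfying the
projection identities `B t (Jφ_t) = 0`, `C t φ_t = 0`, `A t φ_t = i∂_t φ_t` and
`D t (Jφ_t) = i·J(∂_t φ_t)` along the Hartree solution `φ_t`.
Then `Θ(t;0)(φ_t, Jφ_t) = (φ_0, Jφ_0)` for all `t`. -/
theorem stmt_17 {H : Type*} [NormedAddCommGroup H] [InnerProductSpace ℂ H]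
    (Jc : H → H)  -- complex conjugation
    (hJadd : ∀ x y, Jc (x + y) = Jc x + Jc y)
    (hJsmul : ∀ (c : ℂ) (x : H), Jc (c • x) = (starRingEnd ℂ c) • Jc x)
    (hJcont : Continuous Jc)
    (φ φd : ℝ → H)
    (hφ : ∀ t, HasDerivAt φ (φd t) t)
    (A B C D : ℝ → H →L[ℂ] H)  -- the blocks of the generator T(t)
    (hA : ∀ t, A t (φ t) = Complex.I • φd t)
    (hB : ∀ t, B t (Jc (φ t)) = 0)
    (hC : ∀ t, C t (φ t) = 0)
    (hD : ∀ t, D t (Jc (φ t)) = Complex.I • Jc (φd t))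
    (Θ : ℝ → (H × H) →L[ℂ] (H × H))
    (hODE : ∀ t, @HasDerivAt ℝ _ _ _ _ _
      (NormedSpace.toIsBoundedSMul (𝕜 := ℝ) (E := (H × H) →L[ℂ] (H × H))).continuousSMul Θ
      (Complex.I • (Θ t ∘L
        ((A t ∘L ContinuousLinearMap.fst ℂ H H + B t ∘L ContinuousLinearMap.snd ℂ H H).prod
          (C t ∘L ContinuousLinearMap.fst ℂ H H + D t ∘L ContinuousLinearMap.snd ℂ H H)))) t)
    (hinit : Θ 0 = 1) :
    ∀ t : ℝ, Θ t (φ t, Jc (φ t)) = (φ 0, Jc (φ 0)) := by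
  -- J as a real-linear continuous map
  let J' : H →L[ℝ] H :=
    { toFun := Jc
      map_add' := hJadd
      map_smul' := fun r x => by
        have : Jc ((r : ℂ) • x) = (starRingEnd ℂ (r : ℂ)) • Jc x := hJsmul r x
        simpa [Complex.coe_smul] using this
      cont := hJcont }
  have hJ' : ∀ x, J' x = Jc x := fun x => rfl
  set F : ℝ → H × H := fun t => Θ t (φ t, Jc (φ t)) with hF
  have hv : ∀ t : ℝ, HasDerivAt (fun t => ((φ t, Jc (φ t)) : H × H))
      (φd t, Jc (φd t)) t := by
    intro t
    have h2 : HasDerivAt (fun t => Jc (φ t)) (Jc (φd t)) t := by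
      exact (J'.hasFDerivAt.comp_hasDerivAt t (hφ t))
    exact (hφ t).prodMk h2
  have hFd : ∀ t : ℝ, HasDerivAt F 0 t := by
    intro t
    have hR := ((ContinuousLinearMap.restrictScalarsIsometry ℂ (H × H) (H × H) ℝ
        ℝ).toContinuousLinearMap.hasFDerivAt.comp_hasDerivAt t (hODE t))
    have := hR.clm_apply (hv t)
    have key : Complex.I • (Θ t) ((A t) (φ t) + (B t) (Jc (φ t)),
        (C t) (φ t) + (D t) (Jc (φ t))) + (Θ t) (φd t, Jc (φd t)) = 0 := by
      rw [hA t, hB t, hC t, hD t]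
      have h1 : ((Complex.I • φd t + 0, 0 + Complex.I • Jc (φd t)) : H × H)
          = Complex.I • ((φd t, Jc (φd t)) : H × H) := by
        simp [Prod.smul_mk]
      rw [h1, map_smul, smul_smul, Complex.I_mul_I]
      simp
    simpa [key] using this
  intro t
  have hdiff : Differentiable ℝ F := fun x => (hFd x).differentiableAt
  have := is_const_of_deriv_eq_zero hdiff (fun x => (hFd x).deriv) t 0
  simpa [hF, hinit] using this
end
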